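/- Let G be a graph with n vertices and m edges whose line graph is r-regular with r ≥ 1 (equivalently, d(u)+d(v) = r+2 for every edge uv of G). Let ν_1 = r+2, ν_2, …, ν_n be the signless Laplacian eigenvalues of G (r+2 is always a signless Laplacian eigenvalue of such a G). Then the characteristic polynomial of the adjacency matrix of the Q-complemented graph of G, namely of [[0_{n×n}, B(G)],[B(G)ᵀ, J_m − I_m − A(𝓛(G))]], equals (x−1)^{m−1}·(x² − (m−r−1)x − (r+2))·∏_{i=2}^{n} (x + ν_i). -/

import Mathlib

open Matrix SimpleGraph

noncomputable def incMat {V : Type} [Fintype V] [DecidableEq V] {m : ℕ}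
    (G : SimpleGraph V) [Fintype G.edgeSet] (e : Fin m ≃ G.edgeFinset) :
    Matrix V (Fin m) ℝ :=
  Matrix.of fun i j => if i ∈ (e j : Sym2 V) then (1 : ℝ) else 0

-- row sums of B (over edges) at vertex i = degree i
lemma rowsum {n m : ℕ} (G : SimpleGraph (Fin n)) [DecidableRel G.Adj] [Fintype G.edgeSet]
    (e : Fin m ≃ G.edgeFinset) (i : Fin n) :
    ∑ k : Fin m, incMat G e i k = (G.degree i : ℝ) := by
  have h1 : ∑ k : Fin m, incMat G e i k
      = ∑ s ∈ G.edgeFinset.attach, (if i ∈ (s : Sym2 (Fin n)) then (1:ℝ) else 0) :=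
    Fintype.sum_equiv e _ _ (fun k => rfl)
  rw [h1, Finset.sum_attach G.edgeFinset (fun s => if i ∈ s then (1:ℝ) else 0)]
  rw [Finset.sum_ite, Finset.sum_const_zero, add_zero]
  simp only [Finset.sum_const, nsmul_eq_mul, mul_one]
  rw [← incidenceFinset_eq_filter, card_incidenceFinset_eq_degree]

lemma BtB_rowsum {n m : ℕ} (r : ℕ) (G : SimpleGraph (Fin n)) [DecidableRel G.Adj] [Fintype G.edgeSet]
    (e : Fin m ≃ G.edgeFinset)
    (hreg : ∀ u w : Fin n, G.Adj u w → G.degree u + G.degree w = r + 2)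
    (j : Fin m) :
    ∑ k : Fin m, ((incMat G e)ᵀ * incMat G e) j k = (r : ℝ) + 2 := by
  have h1 : ∀ k, ((incMat G e)ᵀ * incMat G e) j k = ∑ i : Fin n, incMat G e i j * incMat G e i k := by
    intro k; rfl
  simp only [h1]
  rw [Finset.sum_comm]
  have h2 : ∀ i : Fin n, ∑ k : Fin m, incMat G e i j * incMat G e i k
      = incMat G e i j * (G.degree i : ℝ) := by
    intro i; rw [← Finset.mul_sum, rowsum]
  simp only [h2]
  -- e j is an edge
  have hmem : (e j : Sym2 (Fin n)) ∈ G.edgeFinset := (e j).2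
  obtain ⟨u, w, huw⟩ : ∃ u w : Fin n, s(u, w) = (e j : Sym2 (Fin n)) := by
    induction (e j : Sym2 (Fin n)) using Sym2.ind with
    | _ a b => exact ⟨a, b, rfl⟩
  have hadj : G.Adj u w := by
    rw [← huw, mem_edgeFinset, mem_edgeSet] at hmem; exact hmem
  have hne : u ≠ w := hadj.ne
  have hval : ∀ i : Fin n, incMat G e i j = if i = u ∨ i = w then (1:ℝ) else 0 := by
    intro i; simp [incMat, ← huw, Sym2.mem_iff]
  simp only [hval]
  rw [Finset.sum_congr rfl (fun i _ => by
    rw [ite_mul, one_mul, zero_mul])]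
  rw [Finset.sum_ite, Finset.sum_const_zero, add_zero]
  have : Finset.univ.filter (fun i : Fin n => i = u ∨ i = w) = {u, w} := by
    ext i; simp [Finset.mem_insert]
  rw [this, Finset.sum_pair hne]
  have h3 := hreg u w hadj
  have : ((G.degree u : ℝ)) + G.degree w = ((r:ℝ)+2) := by exact_mod_cast congrArg (Nat.cast : ℕ → ℝ) h3
  linarith

-- diagonalization
lemma diagdet {n m : ℕ} (B : Matrix (Fin n) (Fin m) ℝ)
    (v : Fin n → Fin n → ℝ) (ν : Fin n → ℝ)
    (hortho : ∀ i j, v i ⬝ᵥ v j = if i = j then 1 else 0)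
    (heig : ∀ i, (B * Bᵀ).mulVec (v i) = ν i • v i) (a b : ℝ) :
    (a • (1 : Matrix (Fin n) (Fin n) ℝ) + b • (B * Bᵀ)).det = ∏ i, (a + b * ν i) := by
  set P : Matrix (Fin n) (Fin n) ℝ := Matrix.of v with hP
  have hPPt : P * Pᵀ = 1 := by
    ext i j
    simp only [Matrix.mul_apply, Matrix.one_apply, Matrix.transpose_apply, hP, Matrix.of_apply]
    simpa [dotProduct] using hortho i j
  have hPtP : Pᵀ * P = 1 := mul_eq_one_comm.mp hPPt
  have hQP : (B * Bᵀ) * Pᵀ = Pᵀ * Matrix.diagonal ν := by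
    ext j i
    rw [Matrix.mul_diagonal]
    have := congrFun (heig i) j
    simp only [Matrix.mulVec, dotProduct, Pi.smul_apply, smul_eq_mul] at this
    simp only [Matrix.mul_apply, Matrix.transpose_apply, hP, Matrix.of_apply] at this ⊢
    rw [this]; ring
  have hQ : B * Bᵀ = Pᵀ * Matrix.diagonal ν * P := by
    rw [← hQP, Matrix.mul_assoc, hPtP, Matrix.mul_one]
  have key : a • (1 : Matrix (Fin n) (Fin n) ℝ) + b • (B * Bᵀ)
      = Pᵀ * Matrix.diagonal (fun i => a + b * ν i) * P := by
    have : Matrix.diagonal (fun i => a + b * ν i)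
        = a • (1 : Matrix (Fin n) (Fin n) ℝ) + b • Matrix.diagonal ν := by
      ext i j
      by_cases h : i = j <;> simp [Matrix.diagonal_apply, h, Matrix.one_apply]
    rw [this, Matrix.mul_add, Matrix.add_mul, Matrix.mul_smul, Matrix.smul_mul,
      Matrix.mul_smul, Matrix.smul_mul, Matrix.mul_one, hPtP, hQ]
  rw [key, Matrix.det_mul, Matrix.det_mul, mul_comm, ← mul_assoc, ← Matrix.det_mul, hPPt]
  simp [Matrix.det_diagonal]

lemma key (n m r : ℕ) (hn : 0 < n) (hm : 1 ≤ m)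
    (G : SimpleGraph (Fin n)) [DecidableRel G.Adj] [Fintype G.edgeSet]
    (e : Fin m ≃ G.edgeFinset)
    (hreg : ∀ u w : Fin n, G.Adj u w → G.degree u + G.degree w = r + 2)
    (v : Fin n → Fin n → ℝ) (ν : Fin n → ℝ)
    (hortho : ∀ i j, v i ⬝ᵥ v j = if i = j then 1 else 0)
    (heig : ∀ i, (incMat G e * (incMat G e)ᵀ).mulVec (v i) = ν i • v i)
    (hν0 : ν ⟨0, hn⟩ = (r : ℝ) + 2)
    (x : ℝ) (hx0 : x ≠ 0) (hx1 : x - 1 ≠ 0) (hxv : ∀ i, x + ν i ≠ 0) :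
    (x • (1 : Matrix (Fin n ⊕ Fin m) (Fin n ⊕ Fin m) ℝ) -
        Matrix.fromBlocks 0 (incMat G e) (incMat G e)ᵀ
          (Matrix.of (fun _ _ => (1 : ℝ)) - 1 -
            ((incMat G e)ᵀ * incMat G e - (2 : ℝ) • 1))).det
      = (x - 1) ^ (m - 1) *
          (x ^ 2 - ((m : ℝ) - (r : ℝ) - 1) * x - ((r : ℝ) + 2)) *
          ∏ i ∈ Finset.univ.erase (⟨0, hn⟩ : Fin n), (x + ν i) := by
  set B := incMat G e with hBdef
  set D : Matrix (Fin m) (Fin m) ℝ :=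
    Matrix.of (fun _ _ => (1:ℝ)) - 1 - (Bᵀ * B - (2:ℝ) • 1) with hD
  have hblock : x • (1 : Matrix (Fin n ⊕ Fin m) (Fin n ⊕ Fin m) ℝ) -
      Matrix.fromBlocks 0 B Bᵀ D
      = Matrix.fromBlocks (x • 1) (-B) (-Bᵀ) (x • 1 - D) := by
    rw [← Matrix.fromBlocks_one, Matrix.fromBlocks_smul, sub_eq_add_neg,
      Matrix.fromBlocks_neg, Matrix.fromBlocks_add]
    congr 1 <;> simp [sub_eq_add_neg]
  rw [hblock]
  haveI : Invertible (x • (1 : Matrix (Fin n) (Fin n) ℝ)) :=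
    ⟨x⁻¹ • 1, by rw [smul_mul_smul_comm, inv_mul_cancel₀ hx0, Matrix.one_mul, one_smul],
      by rw [smul_mul_smul_comm, mul_inv_cancel₀ hx0, Matrix.one_mul, one_smul]⟩
  rw [Matrix.det_fromBlocks₁₁]
  have hinvOf : ⅟(x • (1 : Matrix (Fin n) (Fin n) ℝ)) = x⁻¹ • 1 :=
    invOf_eq_right_inv (by rw [smul_mul_smul_comm, mul_inv_cancel₀ hx0, Matrix.one_mul, one_smul])
  rw [hinvOf]
  -- the Schur complement
  set M : Matrix (Fin m) (Fin m) ℝ := (x-1) • 1 + ((x-1)/x) • (Bᵀ * B) with hM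
  have hS : (x • 1 - D) - (-Bᵀ) * (x⁻¹ • (1 : Matrix (Fin n) (Fin n) ℝ)) * (-B)
      = M + Matrix.replicateCol Unit (fun _ => (1:ℝ)) * Matrix.replicateRow Unit (fun _ => (-1:ℝ)) := by
    have h1 : (-Bᵀ) * (x⁻¹ • (1 : Matrix (Fin n) (Fin n) ℝ)) * (-B) = x⁻¹ • (Bᵀ * B) := by
      simp only [Matrix.neg_mul, Matrix.mul_neg, neg_neg, Matrix.mul_smul, Matrix.smul_mul,
        Matrix.mul_one, smul_neg]
    rw [h1, hD, hM]
    ext i j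
    simp only [Matrix.sub_apply, Matrix.add_apply, Matrix.smul_apply, Matrix.of_apply,
      Matrix.one_apply, Matrix.mul_apply, smul_eq_mul, Finset.univ_unique,
      Finset.sum_singleton, Matrix.replicateCol_apply, Matrix.replicateRow_apply]
    split_ifs with h <;> field_simp <;> ring
  rw [hS, Matrix.det_smul, Matrix.det_one, Fintype.card_fin, mul_one]
  -- determinant of M
  have hMscale : M = (x-1) • (1 + x⁻¹ • (Bᵀ * B)) := by
    rw [smul_add, smul_smul, hM, div_eq_mul_inv]
  have hdet1 : (1 + x⁻¹ • (Bᵀ * B) : Matrix (Fin m) (Fin m) ℝ).det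
      = ∏ i, (1 + x⁻¹ * ν i) := by
    rw [← Matrix.smul_mul, Matrix.det_one_add_mul_comm, Matrix.mul_smul]
    have := diagdet B v ν hortho heig 1 x⁻¹
    rw [one_smul] at this
    exact this
  have hdetM : M.det = (x-1) ^ m * ∏ i, (1 + x⁻¹ * ν i) := by
    rw [hMscale, Matrix.det_smul, hdet1, Fintype.card_fin]
  have hfac : ∀ i, (1 + x⁻¹ * ν i) ≠ 0 := by
    intro i
    have : 1 + x⁻¹ * ν i = (x + ν i) * x⁻¹ := by field_simp
    rw [this]
    exact mul_ne_zero (hxv i) (inv_ne_zero hx0)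
  have hMunit : IsUnit M.det := by
    rw [hdetM]
    exact (IsUnit.mk0 _ (mul_ne_zero (pow_ne_zero _ hx1) (Finset.prod_ne_zero_iff.mpr
      (fun i _ => hfac i))))
  -- eigenvector of ones
  set lam : ℝ := (x-1) + ((x-1)/x) * ((r:ℝ)+2) with hlam
  have hlam_ne : lam ≠ 0 := by
    have h : lam = (x-1) * (x + ((r:ℝ)+2)) * x⁻¹ := by rw [hlam]; field_simp
    rw [h]
    have hx2 : x + ((r:ℝ)+2) ≠ 0 := by rw [← hν0]; exact hxv _
    exact mul_ne_zero (mul_ne_zero hx1 hx2) (inv_ne_zero hx0)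
  have hMones : M *ᵥ (fun _ => (1:ℝ)) = lam • (fun _ => (1:ℝ)) := by
    funext j
    simp only [Matrix.mulVec, dotProduct, Pi.smul_apply, smul_eq_mul, mul_one, hM,
      Matrix.add_apply, Matrix.smul_apply, Matrix.one_apply, smul_eq_mul]
    rw [Finset.sum_add_distrib]
    have h1 : ∑ k : Fin m, (x-1) * (if j = k then (1:ℝ) else 0) = (x-1) := by
      simp [Finset.sum_ite_eq]
    have h2 : ∑ k : Fin m, ((x-1)/x) * (Bᵀ * B) j k = ((x-1)/x) * ((r:ℝ)+2) := by
      rw [← Finset.mul_sum, BtB_rowsum r G e hreg j]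
    rw [h1, h2, hlam]
  have hMinvones : M⁻¹ *ᵥ (fun _ => (1:ℝ)) = lam⁻¹ • (fun _ => (1:ℝ)) := by
    have h0 : (fun _ => (1:ℝ)) = lam⁻¹ • (M *ᵥ (fun _ => (1:ℝ))) := by
      rw [hMones, smul_smul, inv_mul_cancel₀ hlam_ne, one_smul]
    conv_lhs => rw [h0]
    rw [Matrix.mulVec_smul, Matrix.mulVec_mulVec, Matrix.nonsing_inv_mul M hMunit,
      Matrix.one_mulVec]
  -- matrix determinant lemma
  rw [Matrix.det_add_replicateCol_mul_replicateRow hMunit]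
  have hcol : (M⁻¹ * (Matrix.replicateCol Unit (fun _ => (1:ℝ)) : Matrix (Fin m) Unit ℝ) : Matrix (Fin m) Unit ℝ) = Matrix.replicateCol Unit (lam⁻¹ • (fun _ => (1:ℝ))) := by
    rw [← Matrix.replicateCol_mulVec, hMinvones]
  rw [Matrix.mul_assoc, hcol, hdetM, Matrix.det_unique, Matrix.add_apply, Matrix.one_apply_eq,
    Matrix.replicateRow_mul_replicateCol_apply]
  have hdp : (fun _ : Fin m => (-1:ℝ)) ⬝ᵥ (lam⁻¹ • (fun _ => (1:ℝ))) = -((m:ℝ) * lam⁻¹) := by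
    simp only [dotProduct, Pi.smul_apply, smul_eq_mul, mul_one, neg_one_mul]
    rw [Finset.sum_const, Finset.card_univ, Fintype.card_fin, nsmul_eq_mul]
    ring
  rw [hdp]
  have hprodsplit : ∏ i, (1 + x⁻¹ * ν i) = (∏ i, (x + ν i)) * (x⁻¹) ^ n := by
    have h : ∀ i : Fin n, 1 + x⁻¹ * ν i = (x + ν i) * x⁻¹ := by intro i; field_simp
    rw [Finset.prod_congr rfl (fun i _ => h i), Finset.prod_mul_distrib, Finset.prod_const,
      Finset.card_univ, Fintype.card_fin]
  have hprod0 : ∏ i : Fin n, (x + ν i)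
      = (x + ((r:ℝ)+2)) * ∏ i ∈ Finset.univ.erase (⟨0, hn⟩ : Fin n), (x + ν i) := by
    rw [← hν0, ← Finset.mul_prod_erase Finset.univ _ (Finset.mem_univ (⟨0, hn⟩ : Fin n))]
  rw [hprodsplit, hprod0]
  have hpow : (x-1) ^ m = (x-1) ^ (m-1) * (x-1) := by
    rw [← pow_succ, Nat.sub_add_cancel hm]
  have hxn : x ^ n * (x⁻¹) ^ n = 1 := by
    rw [← mul_pow, mul_inv_cancel₀ hx0, one_pow]
  have hlam_eq : lam = (x-1) * (x + ((r:ℝ)+2)) * x⁻¹ := by rw [hlam]; field_simp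
  have hquad : (x + ((r:ℝ)+2)) * ((x-1) * (1 + -((m:ℝ) * lam⁻¹)))
      = x ^ 2 - ((m : ℝ) - (r : ℝ) - 1) * x - ((r : ℝ) + 2) := by
    rw [hlam_eq]
    have hx2 : x + ((r:ℝ)+2) ≠ 0 := by rw [← hν0]; exact hxv _
    field_simp
    ring
  calc x ^ n * ((x - 1) ^ m * ((x + ((r:ℝ)+2)) *
        (∏ i ∈ Finset.univ.erase (⟨0, hn⟩ : Fin n), (x + ν i)) * x⁻¹ ^ n) *
        (1 + -((m:ℝ) * lam⁻¹)))
      = (x ^ n * x⁻¹ ^ n) * ((x-1)^(m-1) *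
          ((x + ((r:ℝ)+2)) * ((x-1) * (1 + -((m:ℝ) * lam⁻¹)))) *
          ∏ i ∈ Finset.univ.erase (⟨0, hn⟩ : Fin n), (x + ν i)) := by
        rw [hpow]; ring
    _ = _ := by rw [hxn, hquad, one_mul]


set_option maxHeartbeats 800000 in
/-- `A`-characteristic polynomial of the Q-complemented graph
of a graph `G` whose line graph is `r`-regular (`d(u)+d(v)=r+2` for every edge
`uv`).  The signless Laplacian is $Q(G)=BB^T$, with eigenvalues
`ν 0 = r+2, ν 1, …`. -/
theorem stmt_14 (n m r : ℕ) (hn : 0 < n) (hm : 1 ≤ m) (hr : 1 ≤ r)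
    (G : SimpleGraph (Fin n)) [DecidableRel G.Adj] [Fintype G.edgeSet]
    (e : Fin m ≃ G.edgeFinset)
    (hreg : ∀ u w : Fin n, G.Adj u w → G.degree u + G.degree w = r + 2)
    (v : Fin n → Fin n → ℝ) (ν : Fin n → ℝ)
    (hortho : ∀ i j, v i ⬝ᵥ v j = if i = j then 1 else 0)
    (heig : ∀ i, (incMat G e * (incMat G e)ᵀ).mulVec (v i) = ν i • v i)
    (hν0 : ν ⟨0, hn⟩ = (r : ℝ) + 2)
    (x : ℝ) :
    (x • (1 : Matrix (Fin n ⊕ Fin m) (Fin n ⊕ Fin m) ℝ) -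
        Matrix.fromBlocks 0 (incMat G e) (incMat G e)ᵀ
          (Matrix.of (fun _ _ => (1 : ℝ)) - 1 -
            ((incMat G e)ᵀ * incMat G e - (2 : ℝ) • 1))).det
      = (x - 1) ^ (m - 1) *
          (x ^ 2 - ((m : ℝ) - (r : ℝ) - 1) * x - ((r : ℝ) + 2)) *
          ∏ i ∈ Finset.univ.erase (⟨0, hn⟩ : Fin n), (x + ν i) := by
  classical
  set N : Matrix (Fin n ⊕ Fin m) (Fin n ⊕ Fin m) ℝ :=
    Matrix.fromBlocks 0 (incMat G e) (incMat G e)ᵀ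
      (Matrix.of (fun _ _ => (1 : ℝ)) - 1 - ((incMat G e)ᵀ * incMat G e - (2:ℝ) • 1)) with hN
  set p : Polynomial ℝ := (Matrix.charmatrix N).det with hp
  set q : Polynomial ℝ := (Polynomial.X - 1) ^ (m-1) *
      (Polynomial.X ^ 2 - Polynomial.C ((m:ℝ) - (r:ℝ) - 1) * Polynomial.X
        - Polynomial.C ((r:ℝ)+2)) *
      ∏ i ∈ Finset.univ.erase (⟨0,hn⟩ : Fin n),
        (Polynomial.X + Polynomial.C (ν i)) with hq
  have hpeval : ∀ y : ℝ, p.eval y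
      = (y • (1 : Matrix (Fin n ⊕ Fin m) (Fin n ⊕ Fin m) ℝ) - N).det := by
    intro y
    rw [hp]
    have h := RingHom.map_det (Polynomial.evalRingHom y) (Matrix.charmatrix N)
    rw [show ((Polynomial.evalRingHom y) (Matrix.charmatrix N).det)
        = (Matrix.charmatrix N).det.eval y from rfl] at h
    rw [h]
    congr 1
    ext i j
    by_cases hij : i = j
    · subst hij
      simp [Matrix.charmatrix_apply_eq, Matrix.one_apply_eq]
    · simp [Matrix.charmatrix_apply_ne _ _ _ hij, Matrix.one_apply_ne hij]
  have hqeval : ∀ y : ℝ, q.eval y = (y - 1) ^ (m - 1) *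
      (y ^ 2 - ((m : ℝ) - (r : ℝ) - 1) * y - ((r : ℝ) + 2)) *
      ∏ i ∈ Finset.univ.erase (⟨0, hn⟩ : Fin n), (y + ν i) := by
    intro y
    simp [hq, Polynomial.eval_prod]
  have hagree : ∀ y : ℝ, y ≠ 0 → y - 1 ≠ 0 → (∀ i, y + ν i ≠ 0) →
      p.eval y = q.eval y := by
    intro y h0 h1 hv
    rw [hpeval, hqeval]
    exact key n m r hn hm G e hreg v ν hortho heig hν0 y h0 h1 hv
  have hpq : p = q := by
    apply Polynomial.eq_of_infinite_eval_eq
    have hbad : Set.Finite (({0, 1} ∪ Set.range (fun i => -ν i)) : Set ℝ) :=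
      ((Set.finite_singleton (1:ℝ)).insert 0).union (Set.finite_range _)
    have hsub : ((({0, 1} ∪ Set.range (fun i => -ν i)) : Set ℝ))ᶜ
        ⊆ {y | p.eval y = q.eval y} := by
      intro y hy
      simp only [Set.mem_compl_iff, Set.mem_union, Set.mem_insert_iff,
        Set.mem_singleton_iff, Set.mem_range, not_or, not_exists] at hy
      obtain ⟨⟨hy0, hy1⟩, hyr⟩ := hy
      refine hagree y hy0 (sub_ne_zero_of_ne hy1) (fun i => fun hcon => ?_)
      exact hyr i (by linarith)
    exact Set.Infinite.mono hsub hbad.infinite_compl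
  calc (x • (1 : Matrix (Fin n ⊕ Fin m) (Fin n ⊕ Fin m) ℝ) - N).det
      = p.eval x := (hpeval x).symm
    _ = q.eval x := by rw [hpq]
    _ = _ := hqeval x
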